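/- arXiv:2107.07371 — 2 statements merged into one kernel-verified Lean document; each statement's English description precedes it below -/
import Mathlib

section
/- Let $\mu_j = C j^{-2\ell}$ for some constants $C > 0$ and $\ell \geq 1$. Then for every $\lambda > 0$, the effective dimension $\gamma(\lambda) = \sum_{j=1}^{\infty} \mu_j/(\mu_j + \lambda)$ satisfies $\gamma(\lambda) \leq C' \lambda^{-1/(2\ell)}$ for some constant $C'$ depending only on $C$ and $\ell$. -/
open Filter

lemma aux_summable_sq : Summable (fun j : ℕ => ((j : ℝ) + 1) ^ (-2 : ℝ)) := by
  have h : Summable (fun n : ℕ => (n : ℝ) ^ (-2 : ℝ)) :=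
    Real.summable_nat_rpow.2 (by norm_num)
  have := (summable_nat_add_iff 1).2 h
  refine this.congr fun n => ?_
  push_cast
  ring_nf

lemma aux_tail (N : ℕ) (hN : 1 ≤ N) :
    ∑' i : ℕ, ((i : ℝ) + N + 1) ^ (-2 : ℝ) ≤ ((N : ℝ))⁻¹ := by
  have hNpos : (0 : ℝ) < N := by exact_mod_cast hN
  have hx : ∀ i : ℕ, (0 : ℝ) < (i : ℝ) + N := fun i => by positivity
  -- telescoping term bound
  have hterm : ∀ i : ℕ, ((i : ℝ) + N + 1) ^ (-2 : ℝ)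
      ≤ ((i : ℝ) + N)⁻¹ - ((i : ℝ) + 1 + N)⁻¹ := by
    intro i
    set x : ℝ := (i : ℝ) + N with hxdef
    have hx0 : 0 < x := hx i
    have h1 : ((i : ℝ) + N + 1) ^ (-2 : ℝ) = ((x + 1) ^ (2 : ℕ))⁻¹ := by
      rw [show (-2 : ℝ) = -((2 : ℕ) : ℝ) by norm_num, Real.rpow_neg (by positivity),
        Real.rpow_natCast]
    have h2 : x⁻¹ - (x + 1)⁻¹ = (x * (x + 1))⁻¹ := by
      field_simp
      ring
    have h3 : ((i : ℝ) + 1 + N)⁻¹ = (x + 1)⁻¹ := by rw [hxdef]; ring_nf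
    rw [h1, h3, h2]
    have hle : x * (x + 1) ≤ (x + 1) ^ (2 : ℕ) := by nlinarith
    exact inv_anti₀ (by positivity) hle
  have hnonneg : ∀ i : ℕ, (0 : ℝ) ≤ ((i : ℝ) + N)⁻¹ - ((i : ℝ) + 1 + N)⁻¹ := by
    intro i
    have : ((i : ℝ) + 1 + N)⁻¹ ≤ ((i : ℝ) + N)⁻¹ :=
      inv_anti₀ (hx i) (by linarith)
    linarith
  have htendsto : Tendsto (fun n : ℕ => ((n : ℝ) + N)⁻¹) atTop (nhds 0) :=
    (tendsto_atTop_add_const_right atTop (N : ℝ) tendsto_natCast_atTop_atTop).inv_tendsto_atTop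
  have hsum : HasSum (fun i : ℕ => ((i : ℝ) + N)⁻¹ - ((i : ℝ) + 1 + N)⁻¹) ((N : ℝ))⁻¹ := by
    rw [hasSum_iff_tendsto_nat_of_nonneg hnonneg]
    have heq : ∀ n : ℕ, ∑ i ∈ Finset.range n, (((i : ℝ) + N)⁻¹ - ((i : ℝ) + 1 + N)⁻¹)
        = ((0 : ℝ) + N)⁻¹ - ((n : ℝ) + N)⁻¹ := by
      intro n
      have h := Finset.sum_range_sub' (f := fun i : ℕ => ((i : ℝ) + N)⁻¹) n
      push_cast at h ⊢
      convert h using 2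
    simp only [heq, zero_add]
    simpa using tendsto_const_nhds.sub htendsto
  have hpos : ∀ i : ℕ, (0 : ℝ) ≤ ((i : ℝ) + N + 1) ^ (-2 : ℝ) := fun i => by positivity
  calc ∑' i : ℕ, ((i : ℝ) + N + 1) ^ (-2 : ℝ)
      ≤ ∑' i : ℕ, (((i : ℝ) + N)⁻¹ - ((i : ℝ) + 1 + N)⁻¹) :=
        Summable.tsum_le_tsum hterm (Summable.of_nonneg_of_le hpos hterm hsum.summable) hsum.summable
    _ = ((N : ℝ))⁻¹ := hsum.tsum_eq

/-- Effective dimension bound for polynomially decaying eigenvalues: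
if `μ j = C * j ^ (-2ℓ)` then `γ(λ) = ∑ μ_j/(μ_j+λ) ≤ C' * λ^(-1/(2ℓ))`
for a constant `C'` depending only on `C` and `ℓ`. -/
theorem stmt_0 (C : ℝ) (hC : 0 < C) (ℓ : ℕ) (hℓ : 1 ≤ ℓ) :
    ∃ C' : ℝ, ∀ lam : ℝ, 0 < lam →
      (∑' j : ℕ, (C * ((j : ℝ) + 1) ^ (-(2 * (ℓ : ℝ)))) /
          (C * ((j : ℝ) + 1) ^ (-(2 * (ℓ : ℝ))) + lam))
        ≤ C' * lam ^ (-(1 / (2 * (ℓ : ℝ)))) := by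
  have hl1 : (1 : ℝ) ≤ (ℓ : ℝ) := by exact_mod_cast hℓ
  have hl2 : (0 : ℝ) < 2 * (ℓ : ℝ) := by linarith
  set K : ℝ := ∑' j : ℕ, ((j : ℝ) + 1) ^ (-2 : ℝ) with hKdef
  have hK0 : 0 ≤ K := tsum_nonneg fun j => by positivity
  refine ⟨(3 + K) * C ^ (1 / (2 * (ℓ : ℝ))), fun lam hlam => ?_⟩
  set p : ℝ := 1 / (2 * (ℓ : ℝ)) with hpdef
  set a : ℝ := (C / lam) ^ p with hadef
  have hCl : 0 < C / lam := div_pos hC hlam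
  have ha0 : 0 < a := Real.rpow_pos_of_pos hCl p
  -- rewrite RHS
  have hRHS : (3 + K) * C ^ p * lam ^ (-p) = (3 + K) * a := by
    rw [Real.rpow_neg hlam.le, hadef, Real.div_rpow hC.le hlam.le]
    ring
  rw [hRHS]
  -- basic facts about the summand
  set f : ℕ → ℝ := fun j =>
    (C * ((j : ℝ) + 1) ^ (-(2 * (ℓ : ℝ)))) / (C * ((j : ℝ) + 1) ^ (-(2 * (ℓ : ℝ))) + lam)
    with hfdef
  have hμpos : ∀ j : ℕ, (0 : ℝ) < C * ((j : ℝ) + 1) ^ (-(2 * (ℓ : ℝ))) := fun j => by positivity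
  have hf0 : ∀ j : ℕ, 0 ≤ f j := fun j => by
    have := hμpos j; simp only [hfdef]; positivity
  have hf1 : ∀ j : ℕ, f j ≤ 1 := fun j => by
    have := hμpos j
    simp only [hfdef]
    rw [div_le_one (by linarith)]
    linarith
  have hfle : ∀ j : ℕ, f j ≤ (C / lam) * ((j : ℝ) + 1) ^ (-(2 * (ℓ : ℝ))) := by
    intro j
    have h1 : f j ≤ (C * ((j : ℝ) + 1) ^ (-(2 * (ℓ : ℝ)))) / lam :=
      div_le_div_of_nonneg_left (hμpos j).le hlam (by linarith [hμpos j])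
    calc f j ≤ (C * ((j : ℝ) + 1) ^ (-(2 * (ℓ : ℝ)))) / lam := h1
      _ = (C / lam) * ((j : ℝ) + 1) ^ (-(2 * (ℓ : ℝ))) := by ring
  have hrpow_le : ∀ j : ℕ, ((j : ℝ) + 1) ^ (-(2 * (ℓ : ℝ))) ≤ ((j : ℝ) + 1) ^ (-2 : ℝ) := by
    intro j
    exact Real.rpow_le_rpow_of_exponent_le (by linarith [Nat.cast_nonneg (α := ℝ) j])
      (by linarith)
  have hμ_summable : Summable (fun j : ℕ => ((j : ℝ) + 1) ^ (-(2 * (ℓ : ℝ)))) :=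
    Summable.of_nonneg_of_le (fun j => by positivity) hrpow_le aux_summable_sq
  have hf_summable : Summable f :=
    Summable.of_nonneg_of_le hf0 hfle (hμ_summable.mul_left _)
  have h_a2l : a ^ (2 * (ℓ : ℝ)) = C / lam := by
    rw [hadef, ← Real.rpow_mul hCl.le, hpdef, one_div, inv_mul_cancel₀ hl2.ne', Real.rpow_one]
  rcases le_or_gt a 1 with hA | hA
  · -- small a : bound every term by (C/lam) μ_j
    have h1 : ∑' j, f j ≤ ∑' j : ℕ, (C / lam) * ((j : ℝ) + 1) ^ (-(2 * (ℓ : ℝ))) :=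
      Summable.tsum_le_tsum hfle hf_summable (hμ_summable.mul_left _)
    have h2 : ∑' j : ℕ, (C / lam) * ((j : ℝ) + 1) ^ (-(2 * (ℓ : ℝ)))
        = (C / lam) * ∑' j : ℕ, ((j : ℝ) + 1) ^ (-(2 * (ℓ : ℝ))) := tsum_mul_left
    have h3 : ∑' j : ℕ, ((j : ℝ) + 1) ^ (-(2 * (ℓ : ℝ))) ≤ K :=
      Summable.tsum_le_tsum hrpow_le hμ_summable aux_summable_sq
    have h4 : C / lam ≤ a := by
      rw [← h_a2l]
      calc a ^ (2 * (ℓ : ℝ)) ≤ a ^ (1 : ℝ) :=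
            Real.rpow_le_rpow_of_exponent_ge ha0 hA (by linarith)
        _ = a := Real.rpow_one a
    have h5 : (0 : ℝ) ≤ ∑' j : ℕ, ((j : ℝ) + 1) ^ (-(2 * (ℓ : ℝ))) :=
      tsum_nonneg fun j => by positivity
    calc ∑' j, f j ≤ (C / lam) * ∑' j : ℕ, ((j : ℝ) + 1) ^ (-(2 * (ℓ : ℝ))) := by
          rw [← h2]; exact h1
      _ ≤ a * K := by nlinarith
      _ ≤ (3 + K) * a := by nlinarith
  · -- large a : split the sum at N = ⌈a⌉₊
    set N : ℕ := ⌈a⌉₊ with hNdef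
    have hN1 : 1 ≤ N := Nat.one_le_ceil_iff.2 ha0
    have hNpos : (0 : ℝ) < N := by exact_mod_cast hN1
    have hNa : a ≤ (N : ℝ) := Nat.le_ceil a
    have hNa2 : (N : ℝ) ≤ 2 * a := by
      have := Nat.ceil_lt_add_one ha0.le
      linarith
    -- tail term bound
    have htail_term : ∀ i : ℕ, f (i + N)
        ≤ ((C / lam) * (N : ℝ) ^ (2 - 2 * (ℓ : ℝ))) * ((i : ℝ) + N + 1) ^ (-2 : ℝ) := by
      intro i
      have hcast : ((i + N : ℕ) : ℝ) + 1 = (i : ℝ) + N + 1 := by push_cast; ring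
      have hxpos : (0 : ℝ) < (i : ℝ) + N + 1 := by positivity
      have hsplit : ((i : ℝ) + N + 1) ^ (-(2 * (ℓ : ℝ)))
          = ((i : ℝ) + N + 1) ^ (2 - 2 * (ℓ : ℝ)) * ((i : ℝ) + N + 1) ^ (-2 : ℝ) := by
        rw [← Real.rpow_add hxpos]
        congr 1
        ring
      have hbase : ((i : ℝ) + N + 1) ^ (2 - 2 * (ℓ : ℝ)) ≤ (N : ℝ) ^ (2 - 2 * (ℓ : ℝ)) :=
        Real.rpow_le_rpow_of_nonpos hNpos (by linarith [Nat.cast_nonneg (α := ℝ) i])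
          (by linarith)
      calc f (i + N) ≤ (C / lam) * (((i + N : ℕ) : ℝ) + 1) ^ (-(2 * (ℓ : ℝ))) := hfle _
        _ = (C / lam) * (((i : ℝ) + N + 1) ^ (2 - 2 * (ℓ : ℝ)) * ((i : ℝ) + N + 1) ^ (-2 : ℝ)) := by
            rw [hcast, hsplit]
        _ ≤ ((C / lam) * (N : ℝ) ^ (2 - 2 * (ℓ : ℝ))) * ((i : ℝ) + N + 1) ^ (-2 : ℝ) := by
            have h2' : (0 : ℝ) ≤ ((i : ℝ) + N + 1) ^ (-2 : ℝ) := by positivity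
            have := mul_le_mul_of_nonneg_right hbase h2'
            nlinarith [hCl.le, this, Real.rpow_nonneg hxpos.le (2 - 2 * (ℓ : ℝ)),
              Real.rpow_nonneg hNpos.le (2 - 2 * (ℓ : ℝ))]
    -- summability of shifted pieces
    have hsq_shift : Summable (fun i : ℕ => ((i : ℝ) + N + 1) ^ (-2 : ℝ)) := by
      have := (summable_nat_add_iff N).2 aux_summable_sq
      refine this.congr fun i => ?_
      push_cast
      ring_nf
    have hf_shift : Summable (fun i : ℕ => f (i + N)) := (summable_nat_add_iff N).2 hf_summable
    -- tail bound
    have htail : ∑' i : ℕ, f (i + N) ≤ a := by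
      have h1 : ∑' i : ℕ, f (i + N)
          ≤ ∑' i : ℕ, ((C / lam) * (N : ℝ) ^ (2 - 2 * (ℓ : ℝ))) * ((i : ℝ) + N + 1) ^ (-2 : ℝ) :=
        Summable.tsum_le_tsum htail_term hf_shift (hsq_shift.mul_left _)
      have h2 : ∑' i : ℕ, ((C / lam) * (N : ℝ) ^ (2 - 2 * (ℓ : ℝ))) * ((i : ℝ) + N + 1) ^ (-2 : ℝ)
          = ((C / lam) * (N : ℝ) ^ (2 - 2 * (ℓ : ℝ))) * ∑' i : ℕ, ((i : ℝ) + N + 1) ^ (-2 : ℝ) :=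
        tsum_mul_left
      have h3 : ((C / lam) * (N : ℝ) ^ (2 - 2 * (ℓ : ℝ))) * ∑' i : ℕ, ((i : ℝ) + N + 1) ^ (-2 : ℝ)
          ≤ ((C / lam) * (N : ℝ) ^ (2 - 2 * (ℓ : ℝ))) * ((N : ℝ))⁻¹ := by
        have hc : 0 ≤ (C / lam) * (N : ℝ) ^ (2 - 2 * (ℓ : ℝ)) := by positivity
        exact mul_le_mul_of_nonneg_left (aux_tail N hN1) hc
      have h4 : ((C / lam) * (N : ℝ) ^ (2 - 2 * (ℓ : ℝ))) * ((N : ℝ))⁻¹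
          = (C / lam) * (N : ℝ) ^ (1 - 2 * (ℓ : ℝ)) := by
        rw [show ((N : ℝ))⁻¹ = (N : ℝ) ^ (-1 : ℝ) by rw [Real.rpow_neg_one],
          mul_assoc, ← Real.rpow_add hNpos]
        congr 1
        ring
      have h5 : (N : ℝ) ^ (1 - 2 * (ℓ : ℝ)) ≤ a ^ (1 - 2 * (ℓ : ℝ)) :=
        Real.rpow_le_rpow_of_nonpos ha0 hNa (by linarith)
      have h6 : (C / lam) * a ^ (1 - 2 * (ℓ : ℝ)) = a := by
        rw [← h_a2l, ← Real.rpow_add ha0,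
          show 2 * (ℓ : ℝ) + (1 - 2 * (ℓ : ℝ)) = 1 by ring, Real.rpow_one]
      calc ∑' i : ℕ, f (i + N)
          ≤ ((C / lam) * (N : ℝ) ^ (2 - 2 * (ℓ : ℝ))) * ((N : ℝ))⁻¹ := by
            rw [← h2] at h3; exact h1.trans h3
        _ = (C / lam) * (N : ℝ) ^ (1 - 2 * (ℓ : ℝ)) := h4
        _ ≤ (C / lam) * a ^ (1 - 2 * (ℓ : ℝ)) := mul_le_mul_of_nonneg_left h5 hCl.le
        _ = a := h6
    -- finite part bound
    have hfin : ∑ i ∈ Finset.range N, f i ≤ (N : ℝ) := by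
      calc ∑ i ∈ Finset.range N, f i ≤ ∑ _i ∈ Finset.range N, (1 : ℝ) :=
            Finset.sum_le_sum fun i _ => hf1 i
        _ = (N : ℝ) := by simp
    have hsplit := Summable.sum_add_tsum_nat_add N hf_summable
    calc ∑' j, f j = ∑ i ∈ Finset.range N, f i + ∑' i : ℕ, f (i + N) := hsplit.symm
      _ ≤ (N : ℝ) + a := add_le_add hfin htail
      _ ≤ 3 * a := by linarith
      _ ≤ (3 + K) * a := by nlinarith
end

section
/- Suppose the eigenvalues satisfy $\mu_j \leq c_1 \exp(-c_2 j^2)$ for positive constants $c_1, c_2$. Then there exist constants $A, B > 0$ such that for all $0 < \lambda < 1$, $\gamma(\lambda) = \sum_{j=1}^\infty \mu_j/(\mu_j+\lambda) \leq A \sqrt{-\log \lambda} + B$. -/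
lemma my_sqrt_add_le (x y : ℝ) (hx : 0 ≤ x) (hy : 0 ≤ y) :
    Real.sqrt (x + y) ≤ Real.sqrt x + Real.sqrt y := by
  have h : x + y ≤ (Real.sqrt x + Real.sqrt y) ^ 2 := by
    nlinarith [Real.sq_sqrt hx, Real.sq_sqrt hy, Real.sqrt_nonneg x, Real.sqrt_nonneg y,
      mul_nonneg (Real.sqrt_nonneg x) (Real.sqrt_nonneg y)]
  calc Real.sqrt (x + y) ≤ Real.sqrt ((Real.sqrt x + Real.sqrt y) ^ 2) := Real.sqrt_le_sqrt h
    _ = Real.sqrt x + Real.sqrt y := Real.sqrt_sq (by positivity)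

/-- For sub-Gaussian eigenvalue decay `μ_j ≤ c₁ exp(-c₂ j²)` the effective
dimension satisfies `γ(λ) ≤ A √(-log λ) + B` for all `0 < λ < 1`. -/
theorem stmt_2 (c₁ c₂ : ℝ) (hc₁ : 0 < c₁) (hc₂ : 0 < c₂)
    (μ : ℕ → ℝ) (hμ0 : ∀ j, 0 ≤ μ j)
    (hμ : ∀ j : ℕ, 1 ≤ j → μ j ≤ c₁ * Real.exp (-c₂ * (j : ℝ) ^ 2)) :
    ∃ A B : ℝ, 0 < A ∧ 0 < B ∧ ∀ lam : ℝ, 0 < lam → lam < 1 →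
      (∑' j : ℕ, μ (j + 1) / (μ (j + 1) + lam))
        ≤ A * Real.sqrt (-Real.log lam) + B := by
  set r : ℝ := Real.exp (-c₂) with hr_def
  have hr0 : 0 < r := Real.exp_pos _
  have hr1 : r < 1 := Real.exp_lt_one_iff.mpr (by linarith)
  set a : ℝ := max (Real.log c₁) 0 with ha_def
  have ha0 : 0 ≤ a := le_max_right _ _
  refine ⟨1 / Real.sqrt c₂, Real.sqrt (a / c₂) + 1 + 1 / (1 - r), by positivity,
    by have h : 0 < 1 - r := by linarith
       positivity,
    fun lam hl0 hl1 => ?_⟩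
  set f : ℕ → ℝ := fun k => μ (k + 1) / (μ (k + 1) + lam) with hf_def
  have hfpos : ∀ k, 0 ≤ f k := fun k =>
    div_nonneg (hμ0 _) (by have := hμ0 (k + 1); linarith)
  have hf1 : ∀ k, f k ≤ 1 := fun k => by
    have h := hμ0 (k + 1)
    exact div_le_one_of_le₀ (by linarith) (by linarith)
  -- pointwise exponential bound
  have hfle : ∀ k : ℕ, f k ≤ c₁ / lam * r ^ (k + 1) := by
    intro k
    have h0 := hμ0 (k + 1)
    have h1 : f k ≤ μ (k + 1) / lam := by
      apply div_le_div_of_nonneg_left h0 hl0 (by linarith)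
    have h2 : μ (k + 1) ≤ c₁ * Real.exp (-c₂ * ((k : ℝ) + 1) ^ 2) := by
      have := hμ (k + 1) (Nat.le_add_left 1 k)
      push_cast at this ⊢
      convert this using 4 <;> ring
    have h3 : Real.exp (-c₂ * ((k : ℝ) + 1) ^ 2) ≤ r ^ (k + 1) := by
      rw [← Real.exp_nat_mul]
      apply Real.exp_le_exp.mpr
      push_cast
      have hk1 : (k:ℝ) + 1 ≤ ((k:ℝ) + 1) ^ 2 := by
        nlinarith [(Nat.cast_nonneg k : (0:ℝ) ≤ (k:ℝ))]
      nlinarith [mul_le_mul_of_nonneg_left hk1 hc₂.le]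
    calc f k ≤ μ (k + 1) / lam := h1
      _ ≤ c₁ * r ^ (k + 1) / lam := by
          apply div_le_div_of_nonneg_right ?_ hl0.le
          calc μ (k+1) ≤ c₁ * Real.exp (-c₂ * ((k : ℝ) + 1) ^ 2) := h2
            _ ≤ c₁ * r ^ (k + 1) := by nlinarith [Real.exp_pos (-c₂ * ((k : ℝ) + 1) ^ 2)]
      _ = c₁ / lam * r ^ (k + 1) := by ring
  have hsum : Summable f := by
    apply Summable.of_nonneg_of_le hfpos hfle
    apply Summable.mul_left
    exact ((summable_geometric_of_lt_one hr0.le hr1).mul_left r).congr (fun n => by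
      rw [pow_succ]; ring)
  -- choice of the cut index
  set t : ℝ := Real.sqrt (max (Real.log (c₁ / lam)) 0 / c₂) with ht_def
  have ht0 : 0 ≤ t := Real.sqrt_nonneg _
  set N : ℕ := ⌈t⌉₊ with hN_def
  have hNt : t ≤ (N : ℝ) := Nat.le_ceil t
  have hNt1 : (N : ℝ) ≤ t + 1 := (Nat.ceil_lt_add_one ht0).le
  have hN : c₁ * Real.exp (-c₂ * (N : ℝ) ^ 2) ≤ lam := by
    have hsq : max (Real.log (c₁ / lam)) 0 / c₂ ≤ (N : ℝ) ^ 2 := by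
      have := Real.sq_sqrt (show (0:ℝ) ≤ max (Real.log (c₁ / lam)) 0 / c₂ by positivity)
      nlinarith
    have h1 : Real.log (c₁ / lam) ≤ c₂ * (N : ℝ) ^ 2 := by
      have := le_max_left (Real.log (c₁ / lam)) 0
      rw [div_le_iff₀ hc₂] at hsq
      nlinarith
    have h2 : Real.exp (-c₂ * (N : ℝ) ^ 2) ≤ lam / c₁ := by
      rw [← Real.exp_log (show (0:ℝ) < lam / c₁ by positivity)]
      apply Real.exp_le_exp.mpr
      have hinv : Real.log (lam / c₁) = - Real.log (c₁ / lam) := by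
        rw [← Real.log_inv, inv_div]
      rw [hinv]; nlinarith
    rw [mul_comm, ← le_div_iff₀ hc₁]
    exact h2
  -- tail bound
  have htail : ∀ n : ℕ, f (n + N) ≤ r ^ n := by
    intro n
    have h0 := hμ0 (n + N + 1)
    have h1 : f (n + N) ≤ μ (n + N + 1) / lam :=
      div_le_div_of_nonneg_left h0 hl0 (by linarith)
    have h2 : μ (n + N + 1) ≤ c₁ * Real.exp (-c₂ * ((n : ℝ) + N + 1) ^ 2) := by
      have := hμ (n + N + 1) (by omega)
      push_cast at this ⊢
      convert this using 4 <;> ring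
    have hkey : Real.exp (-c₂ * ((n : ℝ) + N + 1) ^ 2)
        ≤ Real.exp (-c₂ * (N : ℝ) ^ 2) * r ^ n := by
      rw [← Real.exp_nat_mul, ← Real.exp_add]
      apply Real.exp_le_exp.mpr
      have hn : (0:ℝ) ≤ (n : ℝ) := Nat.cast_nonneg n
      have hNn : (0:ℝ) ≤ (N : ℝ) := Nat.cast_nonneg N
      have hsq : ((N:ℝ)) ^ 2 + (n:ℝ) ≤ ((n:ℝ) + N + 1) ^ 2 := by nlinarith
      nlinarith [mul_le_mul_of_nonneg_left hsq hc₂.le]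
    calc f (n + N) ≤ μ (n + N + 1) / lam := h1
      _ ≤ (c₁ * Real.exp (-c₂ * (N : ℝ) ^ 2)) * r ^ n / lam := by
          apply div_le_div_of_nonneg_right ?_ hl0.le
          calc μ (n + N + 1) ≤ c₁ * Real.exp (-c₂ * ((n : ℝ) + N + 1) ^ 2) := h2
            _ ≤ (c₁ * Real.exp (-c₂ * (N : ℝ) ^ 2)) * r ^ n := by
                rw [mul_assoc]; exact mul_le_mul_of_nonneg_left hkey hc₁.le
      _ ≤ lam * r ^ n / lam := by
          apply div_le_div_of_nonneg_right ?_ hl0.le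
          exact mul_le_mul_of_nonneg_right hN (pow_nonneg hr0.le n)
      _ = r ^ n := by field_simp
  -- split the sum
  have hsplit : ∑' k, f k = (∑ i ∈ Finset.range N, f i) + ∑' n, f (n + N) :=
    (Summable.sum_add_tsum_nat_add N hsum).symm
  have hhead : (∑ i ∈ Finset.range N, f i) ≤ (N : ℝ) := by
    calc (∑ i ∈ Finset.range N, f i) ≤ ∑ i ∈ Finset.range N, (1:ℝ) :=
          Finset.sum_le_sum (fun i _ => hf1 i)
      _ = N := by simp
  have htailsum : ∑' n, f (n + N) ≤ 1 / (1 - r) := by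
    calc ∑' n, f (n + N) ≤ ∑' n, r ^ n := by
          apply Summable.tsum_le_tsum htail ((summable_nat_add_iff N).mpr hsum)
            (summable_geometric_of_lt_one hr0.le hr1)
      _ = (1 - r)⁻¹ := tsum_geometric_of_lt_one hr0.le hr1
      _ = 1 / (1 - r) := (one_div _).symm
  -- estimate t
  have hL0 : 0 ≤ -Real.log lam := by
    have := Real.log_neg hl0 hl1; linarith
  have htle : t ≤ Real.sqrt (a / c₂) + 1 / Real.sqrt c₂ * Real.sqrt (-Real.log lam) := by
    have h1 : max (Real.log (c₁ / lam)) 0 / c₂ ≤ a / c₂ + (-Real.log lam) / c₂ := by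
      have hlog : Real.log (c₁ / lam) = Real.log c₁ + (-Real.log lam) := by
        rw [Real.log_div (ne_of_gt hc₁) (ne_of_gt hl0)]; ring
      have h2 : max (Real.log (c₁ / lam)) 0 ≤ a + (-Real.log lam) := by
        apply max_le
        · rw [hlog]; have := le_max_left (Real.log c₁) 0; linarith
        · linarith
      rw [← add_div]
      exact div_le_div_of_nonneg_right h2 hc₂.le
    calc t ≤ Real.sqrt (a / c₂ + (-Real.log lam) / c₂) := Real.sqrt_le_sqrt h1
      _ ≤ Real.sqrt (a / c₂) + Real.sqrt ((-Real.log lam) / c₂) :=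
          my_sqrt_add_le _ _ (by positivity) (div_nonneg hL0 hc₂.le)
      _ = Real.sqrt (a / c₂) + 1 / Real.sqrt c₂ * Real.sqrt (-Real.log lam) := by
          rw [Real.sqrt_div hL0]
          ring
  have hB0 : (0:ℝ) < 1 / (1 - r) := by
    have h : 0 < 1 - r := by linarith
    positivity
  calc ∑' k, f k = (∑ i ∈ Finset.range N, f i) + ∑' n, f (n + N) := hsplit
    _ ≤ (N : ℝ) + 1 / (1 - r) := add_le_add hhead htailsum
    _ ≤ (t + 1) + 1 / (1 - r) := by linarith
    _ ≤ (Real.sqrt (a / c₂) + 1 / Real.sqrt c₂ * Real.sqrt (-Real.log lam) + 1) + 1 / (1 - r) := by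
        linarith
    _ = 1 / Real.sqrt c₂ * Real.sqrt (-Real.log lam)
        + (Real.sqrt (a / c₂) + 1 + 1 / (1 - r)) := by ring
end
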